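/- Let α be a real number with |α| ≤ 1. Define g : [0,∞)×[0,∞) → ℝ by g(t,ξ) = φ_{0,0}(ξ) + ∑_{n=1}^∞ n C_n^0(α) e^{−n² t} φ_{0,n}(ξ), the series converging absolutely at every point. Then for every t > 0 and ξ > 0, the partial derivatives ∂g/∂t, ∂g/∂ξ and ∂²g/∂ξ² exist and satisfy ∂g/∂t (t,ξ) = −ξ² ∂²g/∂ξ² (t,ξ) − ξ ∂g/∂ξ (t,ξ) + ξ² g(t,ξ). -/

import Mathlib

/-- For real `ν ≥ 0` and integer `n ≥ 0`, the function
`φ_{ν,n}(ξ) = ∑_{m=0}^∞ ξ^(n+2m) / (2^(ν+n+2m) Γ(m+1) Γ(ν+n+m+1))`;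
in particular `φ_{0,n}(ξ) = I_n(ξ)`, the modified Bessel function of the first kind. -/
noncomputable def phiBessel (ν : ℝ) (n : ℕ) (ξ : ℝ) : ℝ :=
  ∑' m : ℕ, ξ ^ (n + 2 * m) /
    ((2 : ℝ) ^ (ν + n + 2 * (m : ℝ)) * Real.Gamma ((m : ℝ) + 1) * Real.Gamma (ν + n + m + 1))

/-- The degenerate Gegenbauer polynomial: `C_0^0(x) = 1` and, for `n ≥ 1`,
`C_n^0(x) = ∑_{m=0}^{⌊n/2⌋} (−1)^m Γ(n−m) (2x)^(n−2m) / (Γ(m+1) Γ(n−2m+1))`. -/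
noncomputable def gegenbauerC0 (n : ℕ) (x : ℝ) : ℝ :=
  if n = 0 then 1 else
    ∑ m ∈ Finset.range (n / 2 + 1),
      (-1 : ℝ) ^ m * Real.Gamma ((n : ℝ) - m) * (2 * x) ^ (n - 2 * m) /
        (Real.Gamma ((m : ℝ) + 1) * Real.Gamma ((n : ℝ) - 2 * m + 1))

/-- The function `g(t,ξ) = φ_{0,0}(ξ) + ∑_{n=1}^∞ n C_n^0(α) e^(−n²t) φ_{0,n}(ξ)`. -/
noncomputable def gZero (α t ξ : ℝ) : ℝ :=
  phiBessel 0 0 ξ +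
    ∑' n : ℕ, ((n + 1 : ℕ) : ℝ) * gegenbauerC0 (n + 1) α *
      Real.exp (-((n + 1 : ℕ) : ℝ) ^ 2 * t) * phiBessel 0 (n + 1) ξ

namespace GZ

noncomputable def aC (n m : ℕ) : ℝ :=
  1 / ((2:ℝ)^(n+2*m) * m.factorial * (n+m).factorial)

lemma aC_pos (n m : ℕ) : 0 < aC n m := by
  unfold aC
  positivity

noncomputable def P (n : ℕ) (ξ : ℝ) : ℝ := ∑' m : ℕ, aC n m * ξ^(n+2*m)

noncomputable def P1 (n : ℕ) (ξ : ℝ) : ℝ :=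
  ∑' m : ℕ, aC n m * (((n+2*m : ℕ) : ℝ) * ξ^(n+2*m-1))

noncomputable def P2 (n : ℕ) (ξ : ℝ) : ℝ :=
  ∑' m : ℕ, aC n m * (((n+2*m : ℕ) : ℝ) * (((n+2*m-1 : ℕ) : ℝ) * ξ^(n+2*m-2)))

lemma phiBessel_zero_eq (n : ℕ) (ξ : ℝ) : phiBessel 0 n ξ = P n ξ := by
  unfold phiBessel P aC
  refine tsum_congr fun m => ?_
  have h1 : (0 : ℝ) + n + 2 * (m:ℝ) = ((n + 2*m : ℕ) : ℝ) := by push_cast; ring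
  have h2 : (0:ℝ) + n + m + 1 = ((n + m : ℕ) : ℝ) + 1 := by push_cast; ring
  rw [h1, h2, Real.rpow_natCast, Real.Gamma_nat_eq_factorial,
    Real.Gamma_nat_eq_factorial]
  ring

noncomputable def B (R : ℝ) (n m : ℕ) : ℝ :=
  (2*R)^n / n.factorial * ((4*R^2)^m / m.factorial)

lemma B_nonneg {R : ℝ} (hR : 0 ≤ R) (n m : ℕ) : 0 ≤ B R n m := by
  unfold B; positivity

lemma summable_B (R : ℝ) (n : ℕ) : Summable (B R n) :=
  (Real.summable_pow_div_factorial (4*R^2)).mul_left _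

lemma master {R ξ : ℝ} (hR : 1 ≤ R) (hξ : |ξ| ≤ R) (n m d k' : ℕ)
    (hd : (d:ℝ) ≤ 4^(n+2*m)) (hk' : k' ≤ n+2*m) :
    |aC n m * ((d:ℝ) * ξ^k')| ≤ B R n m := by
  have hR0 : (0:ℝ) < R := lt_of_lt_of_le one_pos hR
  have hxa : (0:ℝ) ≤ |ξ| := abs_nonneg ξ
  rw [abs_mul, abs_mul, abs_pow, abs_of_pos (aC_pos n m), Nat.abs_cast]
  have h1 : |ξ|^k' ≤ R^(n+2*m) :=
    (pow_le_pow_left₀ hxa hξ k').trans (pow_le_pow_right₀ hR hk')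
  have h2 : aC n m * ((d:ℝ) * |ξ|^k') ≤ aC n m * ((4:ℝ)^(n+2*m) * R^(n+2*m)) := by
    apply mul_le_mul_of_nonneg_left _ (aC_pos n m).le
    apply mul_le_mul hd h1 (pow_nonneg hxa _) (by positivity)
  refine h2.trans ?_
  have h3 : aC n m * ((4:ℝ)^(n+2*m) * R^(n+2*m)) =
      (2*R)^(n+2*m) / ((m.factorial : ℝ) * (n+m).factorial) := by
    unfold aC
    rw [mul_pow, show (4:ℝ)^(n+2*m) = 2^(n+2*m)*2^(n+2*m) from by rw [← mul_pow]; norm_num]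
    have hf1 : ((m.factorial : ℝ)) ≠ 0 := Nat.cast_ne_zero.2 m.factorial_ne_zero
    have hf2 : (((n+m).factorial : ℝ)) ≠ 0 := Nat.cast_ne_zero.2 (n+m).factorial_ne_zero
    have h2k : ((2:ℝ))^(n+2*m) ≠ 0 := by positivity
    field_simp
  rw [h3]
  have h4 : (2*R)^(n+2*m) = (2*R)^n * (4*R^2)^m := by
    rw [pow_add, pow_mul]
    congr 2
    ring
  have h5 : (B R n m) = (2*R)^n * (4*R^2)^m / ((n.factorial : ℝ) * m.factorial) := by
    unfold B; field_simp
  rw [h4, h5]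
  apply div_le_div_of_nonneg_left (by positivity) (by positivity)
  have : (n.factorial : ℝ) ≤ ((n+m).factorial : ℝ) :=
    Nat.cast_le.2 (Nat.factorial_le (Nat.le_add_right n m))
  calc ((n.factorial:ℝ)) * m.factorial ≤ ((n+m).factorial : ℝ) * m.factorial := by
        apply mul_le_mul_of_nonneg_right this (by positivity)
    _ = (m.factorial : ℝ) * (n+m).factorial := by ring

lemma nat_le_four_pow (k : ℕ) : (k : ℝ) ≤ 4^k := by
  have h := Nat.lt_two_pow_self (n := k)
  have h2 : (k:ℝ) ≤ 2^k := by exact_mod_cast h.le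
  refine h2.trans ?_
  apply pow_le_pow_left₀ (by norm_num) (by norm_num)

lemma bound0 {R ξ : ℝ} (hR : 1 ≤ R) (hξ : |ξ| ≤ R) (n m : ℕ) :
    |aC n m * ξ^(n+2*m)| ≤ B R n m := by
  have := master hR hξ n m 1 (n+2*m) (by simpa using one_le_pow₀ (by norm_num : (1:ℝ) ≤ 4)) le_rfl
  simpa using this

lemma bound1 {R ξ : ℝ} (hR : 1 ≤ R) (hξ : |ξ| ≤ R) (n m : ℕ) :
    |aC n m * (((n+2*m : ℕ):ℝ) * ξ^(n+2*m-1))| ≤ B R n m :=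
  master hR hξ n m (n+2*m) (n+2*m-1) (nat_le_four_pow _) (Nat.sub_le _ _)

lemma bound2 {R ξ : ℝ} (hR : 1 ≤ R) (hξ : |ξ| ≤ R) (n m : ℕ) :
    |aC n m * (((n+2*m : ℕ):ℝ) * (((n+2*m-1 : ℕ):ℝ) * ξ^(n+2*m-2)))| ≤ B R n m := by
  have h : ((n+2*m) * (n+2*m-1) : ℕ) ≤ 4^(n+2*m) := by
    calc (n+2*m) * (n+2*m-1) ≤ 2^(n+2*m) * 2^(n+2*m) := by
          apply Nat.mul_le_mul (Nat.lt_two_pow_self).le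
            ((Nat.sub_le _ _).trans (Nat.lt_two_pow_self).le)
      _ = 4^(n+2*m) := by rw [← Nat.mul_pow]
  have := master hR hξ n m ((n+2*m) * (n+2*m-1)) (n+2*m-2)
    (by exact_mod_cast Nat.cast_le.2 h) (by omega)
  rw [show (((n+2*m) * (n+2*m-1) : ℕ) : ℝ) = ((n+2*m:ℕ):ℝ) * ((n+2*m-1:ℕ):ℝ) by push_cast; ring,
    mul_assoc] at this
  exact this

lemma summable_P (n : ℕ) (ξ : ℝ) : Summable (fun m => aC n m * ξ^(n+2*m)) :=
  Summable.of_norm_bounded (summable_B (|ξ|+1) n)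
    (fun m => bound0 (by simp [abs_nonneg, le_add_iff_nonneg_left]) (by linarith [abs_nonneg ξ]) n m)

lemma summable_P1 (n : ℕ) (ξ : ℝ) :
    Summable (fun m => aC n m * (((n+2*m : ℕ):ℝ) * ξ^(n+2*m-1))) :=
  Summable.of_norm_bounded (summable_B (|ξ|+1) n)
    (fun m => bound1 (by linarith [abs_nonneg ξ]) (by linarith [abs_nonneg ξ]) n m)

lemma summable_P2 (n : ℕ) (ξ : ℝ) :
    Summable (fun m => aC n m * (((n+2*m : ℕ):ℝ) * (((n+2*m-1 : ℕ):ℝ) * ξ^(n+2*m-2)))) :=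
  Summable.of_norm_bounded (summable_B (|ξ|+1) n)
    (fun m => bound2 (by linarith [abs_nonneg ξ]) (by linarith [abs_nonneg ξ]) n m)

noncomputable def EE (R : ℝ) : ℝ := ∑' m : ℕ, (4*R^2)^m / m.factorial

lemma EE_nonneg (R : ℝ) : 0 ≤ EE R := tsum_nonneg (fun m => by positivity)

lemma tsum_B (R : ℝ) (n : ℕ) : ∑' m, B R n m = (2*R)^n / n.factorial * EE R := by
  unfold B EE
  exact tsum_mul_left

lemma abs_tsum_le_B {f : ℕ → ℝ} {R : ℝ} (hR : 0 ≤ R) {n : ℕ}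
    (hf : ∀ m, |f m| ≤ B R n m) : |∑' m, f m| ≤ (2*R)^n / n.factorial * EE R := by
  rw [← tsum_B]
  have hs : Summable f := Summable.of_norm_bounded (summable_B R n) hf
  have habs : Summable fun m => |f m| := hs.abs
  have h1 : ‖∑' m, f m‖ ≤ ∑' m, ‖f m‖ :=
    norm_tsum_le_tsum_norm (by simpa [Real.norm_eq_abs] using habs)
  simp only [Real.norm_eq_abs] at h1
  exact h1.trans (Summable.tsum_le_tsum hf habs (summable_B R n))

lemma P_abs_le {R ξ : ℝ} (hR : 1 ≤ R) (hξ : |ξ| ≤ R) (n : ℕ) :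
    |P n ξ| ≤ (2*R)^n / n.factorial * EE R :=
  abs_tsum_le_B (by linarith) (fun m => bound0 hR hξ n m)

lemma P1_abs_le {R ξ : ℝ} (hR : 1 ≤ R) (hξ : |ξ| ≤ R) (n : ℕ) :
    |P1 n ξ| ≤ (2*R)^n / n.factorial * EE R :=
  abs_tsum_le_B (by linarith) (fun m => bound1 hR hξ n m)

lemma P2_abs_le {R ξ : ℝ} (hR : 1 ≤ R) (hξ : |ξ| ≤ R) (n : ℕ) :
    |P2 n ξ| ≤ (2*R)^n / n.factorial * EE R :=
  abs_tsum_le_B (by linarith) (fun m => bound2 hR hξ n m)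

lemma hasDerivAt_P (n : ℕ) (ξ : ℝ) : HasDerivAt (P n) (P1 n ξ) ξ := by
  set R : ℝ := |ξ| + 1 with hRdef
  have hR : 1 ≤ R := by rw [hRdef]; linarith [abs_nonneg ξ]
  apply hasDerivAt_tsum_of_isPreconnected (summable_B R n) (Metric.isOpen_ball)
    ((convex_ball (0:ℝ) R).isPreconnected)
    (g := fun m η => aC n m * η^(n+2*m))
    (g' := fun m η => aC n m * (((n+2*m : ℕ):ℝ) * η^(n+2*m-1)))
    (y₀ := ξ)
  · intro m y _
    exact (hasDerivAt_pow (n+2*m) y).const_mul (aC n m)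
  · intro m y hy
    rw [mem_ball_zero_iff] at hy
    exact bound1 hR (by simpa using hy.le) n m
  · exact mem_ball_zero_iff.2 (by rw [Real.norm_eq_abs, hRdef]; linarith)
  · exact summable_P n ξ
  · exact mem_ball_zero_iff.2 (by rw [Real.norm_eq_abs, hRdef]; linarith)

lemma hasDerivAt_P1 (n : ℕ) (ξ : ℝ) : HasDerivAt (P1 n) (P2 n ξ) ξ := by
  set R : ℝ := |ξ| + 1 with hRdef
  have hR : 1 ≤ R := by rw [hRdef]; linarith [abs_nonneg ξ]
  apply hasDerivAt_tsum_of_isPreconnected (summable_B R n) (Metric.isOpen_ball)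
    ((convex_ball (0:ℝ) R).isPreconnected)
    (g := fun m η => aC n m * (((n+2*m : ℕ):ℝ) * η^(n+2*m-1)))
    (g' := fun m η => aC n m * (((n+2*m : ℕ):ℝ) * (((n+2*m-1 : ℕ):ℝ) * η^(n+2*m-2))))
    (y₀ := ξ)
  · intro m y _
    have h := ((hasDerivAt_pow (n+2*m-1) y).const_mul ((n+2*m : ℕ):ℝ)).const_mul (aC n m)
    rw [show n+2*m-1-1 = n+2*m-2 by omega] at h
    exact h
  · intro m y hy
    rw [mem_ball_zero_iff] at hy
    exact bound2 hR (by simpa using hy.le) n m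
  · exact mem_ball_zero_iff.2 (by rw [Real.norm_eq_abs, hRdef]; linarith)
  · exact summable_P1 n ξ
  · exact mem_ball_zero_iff.2 (by rw [Real.norm_eq_abs, hRdef]; linarith)

lemma pow_helperA (k : ℕ) (ξ : ℝ) :
    ξ^2 * ((k:ℝ) * (((k-1 : ℕ):ℝ) * ξ^(k-2))) = ((k:ℝ) * ((k:ℝ)-1)) * ξ^k := by
  match k with
  | 0 => simp
  | 1 => simp
  | (k+2) =>
    have h1 : ((k+2-1 : ℕ):ℝ) = (k:ℝ)+1 := by norm_num
    have h2 : (k+2-2 : ℕ) = k := by omega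
    rw [h1, h2]
    push_cast
    ring

lemma pow_helperB (k : ℕ) (ξ : ℝ) : ξ * ((k:ℝ) * ξ^(k-1)) = (k:ℝ) * ξ^k := by
  match k with
  | 0 => simp
  | (k+1) =>
    have h2 : (k+1-1 : ℕ) = k := by omega
    rw [h2]
    push_cast
    ring

lemma aC_rec (n m : ℕ) : aC n (m+1) * (4*((m:ℝ)+1)*((n:ℝ)+m+1)) = aC n m := by
  unfold aC
  have e1 : n + 2*(m+1) = (n+2*m) + 2 := by ring
  have e2 : n + (m+1) = (n+m) + 1 := by ring
  rw [e1, e2, pow_add, Nat.factorial_succ, Nat.factorial_succ]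
  have hf1 : ((m.factorial : ℝ)) ≠ 0 := Nat.cast_ne_zero.2 m.factorial_ne_zero
  have hf2 : (((n+m).factorial : ℝ)) ≠ 0 := Nat.cast_ne_zero.2 (n+m).factorial_ne_zero
  have h2k : ((2:ℝ))^(n+2*m) ≠ 0 := by positivity
  push_cast
  field_simp
  ring

lemma bessel (n : ℕ) (ξ : ℝ) :
    ξ^2 * P2 n ξ + ξ * P1 n ξ - (n:ℝ)^2 * P n ξ = ξ^2 * P n ξ := by
  have s0 := summable_P n ξ
  have s1 := summable_P1 n ξ
  have s2 := summable_P2 n ξ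
  set F : ℕ → ℝ := fun m => aC n m * (((((n+2*m:ℕ)):ℝ)^2 - (n:ℝ)^2) * ξ^(n+2*m)) with hF
  have key : (fun m => ξ^2 * (aC n m * (((n+2*m : ℕ):ℝ) * (((n+2*m-1 : ℕ):ℝ) * ξ^(n+2*m-2))))
      + ξ * (aC n m * (((n+2*m : ℕ):ℝ) * ξ^(n+2*m-1)))
      - (n:ℝ)^2 * (aC n m * ξ^(n+2*m))) = F := by
    funext m
    have hA := pow_helperA (n+2*m) ξ
    have hB := pow_helperB (n+2*m) ξ
    simp only [hF]
    calc ξ^2 * (aC n m * (((n+2*m : ℕ):ℝ) * (((n+2*m-1 : ℕ):ℝ) * ξ^(n+2*m-2))))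
        + ξ * (aC n m * (((n+2*m : ℕ):ℝ) * ξ^(n+2*m-1)))
        - (n:ℝ)^2 * (aC n m * ξ^(n+2*m))
        = aC n m * (ξ^2 * (((n+2*m : ℕ):ℝ) * (((n+2*m-1 : ℕ):ℝ) * ξ^(n+2*m-2)))
          + ξ * (((n+2*m : ℕ):ℝ) * ξ^(n+2*m-1))
          - (n:ℝ)^2 * ξ^(n+2*m)) := by ring
      _ = aC n m * (((((n+2*m:ℕ)):ℝ)^2 - (n:ℝ)^2) * ξ^(n+2*m)) := by rw [hA, hB]; ring
  have hFsum : Summable F := by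
    rw [← key]
    exact ((s2.mul_left (ξ^2)).add (s1.mul_left ξ)).sub (s0.mul_left ((n:ℝ)^2))
  have lhs_eq : ξ^2 * P2 n ξ + ξ * P1 n ξ - (n:ℝ)^2 * P n ξ = ∑' m, F m := by
    unfold P P1 P2
    rw [← tsum_mul_left, ← tsum_mul_left, ← tsum_mul_left, ← key]
    rw [← Summable.tsum_add (s2.mul_left (ξ^2)) (s1.mul_left ξ),
      ← Summable.tsum_sub ((s2.mul_left (ξ^2)).add (s1.mul_left ξ)) (s0.mul_left ((n:ℝ)^2))]
  have F0 : F 0 = 0 := by simp [hF]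
  have Fsucc : ∀ m : ℕ, F (m+1) = ξ^2 * (aC n m * ξ^(n+2*m)) := by
    intro m
    have hc : ((((n+2*(m+1):ℕ)):ℝ)^2 - (n:ℝ)^2) = 4*((m:ℝ)+1)*((n:ℝ)+m+1) := by
      push_cast; ring
    have he : n+2*(m+1) = (n+2*m)+2 := by ring
    simp only [hF, hc]
    rw [he, pow_add]
    have := aC_rec n m
    linear_combination (ξ^(n+2*m) * ξ^2) * this
  have rhs_eq : ∑' m, F m = ξ^2 * P n ξ := by
    rw [Summable.tsum_eq_zero_add hFsum, F0, zero_add]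
    unfold P
    rw [← tsum_mul_left]
    exact tsum_congr Fsucc
  rw [lhs_eq, rhs_eq]

lemma fact_le_aux (n k : ℕ) : ∀ j, k + j ≤ n → (k+j).factorial ≤ n^j * k.factorial := by
  intro j
  induction j with
  | zero => simp
  | succ j ih =>
    intro h
    have h' : k + j ≤ n := by omega
    have := ih h'
    calc (k+(j+1)).factorial = (k+j+1) * (k+j).factorial := by
          rw [show k+(j+1) = (k+j)+1 by ring, Nat.factorial_succ]
      _ ≤ n * (n^j * k.factorial) := Nat.mul_le_mul (by omega) this
      _ = n^(j+1) * k.factorial := by ring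

lemma geg_term_bound {α : ℝ} (hα : |α| ≤ 1) {n : ℕ} (hn : 1 ≤ n) {m : ℕ} (hm : m ≤ n/2) :
    |(-1 : ℝ) ^ m * Real.Gamma ((n : ℝ) - m) * (2 * α) ^ (n - 2 * m) /
        (Real.Gamma ((m : ℝ) + 1) * Real.Gamma ((n : ℝ) - 2 * m + 1))|
      ≤ 2^n * ((n:ℝ)^m / m.factorial) := by
  have h2m : 2*m ≤ n := by omega
  have hmn : m + 1 ≤ n := by omega
  have hG1 : Real.Gamma ((n : ℝ) - m) = ((n - m - 1).factorial : ℝ) := by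
    rw [show (n:ℝ) - m = ((n - m - 1 : ℕ) : ℝ) + 1 by
      push_cast [Nat.cast_sub (by omega : m ≤ n), Nat.cast_sub (by omega : 1 ≤ n - m)]; ring]
    exact Real.Gamma_nat_eq_factorial _
  have hG2 : Real.Gamma ((m : ℝ) + 1) = (m.factorial : ℝ) := Real.Gamma_nat_eq_factorial m
  have hG3 : Real.Gamma ((n : ℝ) - 2*m + 1) = ((n - 2*m).factorial : ℝ) := by
    rw [show (n:ℝ) - 2*m + 1 = ((n - 2*m : ℕ) : ℝ) + 1 by
      push_cast [Nat.cast_sub h2m]; ring]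
    exact Real.Gamma_nat_eq_factorial _
  rw [hG1, hG2, hG3, abs_div, abs_mul, abs_mul, abs_pow, abs_neg, abs_one, one_pow, one_mul,
    abs_pow]
  have hfact : ((n - m - 1).factorial : ℝ) ≤ (n:ℝ)^m * ((n - 2*m).factorial : ℝ) := by
    rcases Nat.eq_zero_or_pos m with hm0 | hm0
    · subst hm0
      simp only [Nat.sub_zero, pow_zero, one_mul, Nat.mul_zero]
      exact_mod_cast Nat.factorial_le (by omega)
    · have he : n - m - 1 = (n - 2*m) + (m - 1) := by omega
      have h1 : ((n - m - 1).factorial : ℕ) ≤ n^(m-1) * (n - 2*m).factorial := by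
        rw [he]; exact fact_le_aux n (n - 2*m) (m-1) (by omega)
      have h2 : (n:ℕ)^(m-1) ≤ n^m := Nat.pow_le_pow_right (by omega) (by omega)
      calc ((n - m - 1).factorial : ℝ) ≤ ((n^(m-1) * (n - 2*m).factorial : ℕ) : ℝ) := by
            exact_mod_cast h1
        _ ≤ ((n^m * (n - 2*m).factorial : ℕ) : ℝ) := by
            exact_mod_cast Nat.mul_le_mul_right _ h2
        _ = (n:ℝ)^m * ((n - 2*m).factorial : ℝ) := by push_cast; ring
  have h2α : |2*α|^(n-2*m) ≤ 2^n := by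
    calc |2*α|^(n-2*m) ≤ 2^(n-2*m) := by
          apply pow_le_pow_left₀ (abs_nonneg _)
          rw [abs_mul]; simp; linarith [hα]
      _ ≤ 2^n := pow_le_pow_right₀ (by norm_num) (by omega)
  have hden : |(m.factorial : ℝ) * ((n-2*m).factorial : ℝ)|
      = (m.factorial : ℝ) * ((n-2*m).factorial : ℝ) := abs_of_pos (by positivity)
  rw [hden]
  rw [div_le_iff₀ (by positivity)]
  have habs1 : |((n - m - 1).factorial : ℝ)| = ((n - m - 1).factorial : ℝ) :=
    abs_of_pos (by positivity)
  rw [habs1]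
  calc ((n - m - 1).factorial : ℝ) * |2*α|^(n-2*m)
      ≤ ((n:ℝ)^m * ((n - 2*m).factorial : ℝ)) * 2^n := by
        apply mul_le_mul hfact h2α (by positivity) (by positivity)
    _ = 2^n * ((n:ℝ)^m / m.factorial) * ((m.factorial :ℝ) * ((n-2*m).factorial : ℝ)) := by
        field_simp
lemma geg_bound {α : ℝ} (hα : |α| ≤ 1) (n : ℕ) :
    |gegenbauerC0 n α| ≤ (2 * Real.exp 1)^n := by
  unfold gegenbauerC0
  rcases Nat.eq_zero_or_pos n with h | h
  · subst h; simp
  rw [if_neg (by omega)]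
  calc |∑ m ∈ Finset.range (n / 2 + 1),
        (-1 : ℝ) ^ m * Real.Gamma ((n : ℝ) - m) * (2 * α) ^ (n - 2 * m) /
          (Real.Gamma ((m : ℝ) + 1) * Real.Gamma ((n : ℝ) - 2 * m + 1))|
      ≤ ∑ m ∈ Finset.range (n / 2 + 1), |(-1 : ℝ) ^ m * Real.Gamma ((n : ℝ) - m) *
          (2 * α) ^ (n - 2 * m) /
          (Real.Gamma ((m : ℝ) + 1) * Real.Gamma ((n : ℝ) - 2 * m + 1))| :=
        Finset.abs_sum_le_sum_abs _ _
    _ ≤ ∑ m ∈ Finset.range (n / 2 + 1), 2^n * ((n:ℝ)^m / m.factorial) := by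
        apply Finset.sum_le_sum
        intro m hm
        exact geg_term_bound hα h (by simpa using Nat.lt_succ_iff.1 (Finset.mem_range.1 hm))
    _ = 2^n * ∑ m ∈ Finset.range (n / 2 + 1), ((n:ℝ)^m / m.factorial) := by
        rw [Finset.mul_sum]
    _ ≤ 2^n * Real.exp n := by
        apply mul_le_mul_of_nonneg_left _ (by positivity)
        exact Real.sum_le_exp_of_nonneg (by positivity) _
    _ = (2 * Real.exp 1)^n := by
        rw [mul_pow, ← Real.exp_nat_mul]
        norm_num

noncomputable def bC (α : ℝ) (n : ℕ) (t : ℝ) : ℝ :=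
  ((n + 1 : ℕ) : ℝ) * gegenbauerC0 (n + 1) α * Real.exp (-((n + 1 : ℕ) : ℝ) ^ 2 * t)

lemma gZero_eq (α t ξ : ℝ) : gZero α t ξ = P 0 ξ + ∑' n, bC α n t * P (n+1) ξ := by
  unfold gZero bC
  rw [phiBessel_zero_eq]
  congr 1
  exact tsum_congr fun n => by rw [phiBessel_zero_eq]

lemma bC_abs_le {α : ℝ} (hα : |α| ≤ 1) (n : ℕ) {t : ℝ} (ht : 0 ≤ t) :
    |bC α n t| ≤ ((n+1:ℕ):ℝ) * (2 * Real.exp 1)^(n+1) := by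
  unfold bC
  rw [abs_mul, abs_mul, Nat.abs_cast]
  have h1 : |gegenbauerC0 (n+1) α| ≤ (2 * Real.exp 1)^(n+1) := geg_bound hα (n+1)
  have h2 : |Real.exp (-((n + 1 : ℕ) : ℝ) ^ 2 * t)| ≤ 1 := by
    rw [abs_of_pos (Real.exp_pos _)]
    apply Real.exp_le_one_iff.2
    have : (0:ℝ) ≤ ((n+1:ℕ):ℝ)^2 * t := by positivity
    nlinarith
  calc ((n+1:ℕ):ℝ) * |gegenbauerC0 (n+1) α| * |Real.exp (-((n + 1 : ℕ) : ℝ) ^ 2 * t)|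
      ≤ ((n+1:ℕ):ℝ) * (2 * Real.exp 1)^(n+1) * 1 := by
        apply mul_le_mul (mul_le_mul_of_nonneg_left h1 (by positivity)) h2 (abs_nonneg _)
          (by positivity)
    _ = ((n+1:ℕ):ℝ) * (2 * Real.exp 1)^(n+1) := by ring

noncomputable def u (R : ℝ) (n : ℕ) : ℝ :=
  (32 * Real.exp 1 * R)^(n+1) / (n+1).factorial * EE R

lemma summable_u (R : ℝ) : Summable (u R) := by
  have h := Real.summable_pow_div_factorial (32 * Real.exp 1 * R)
  have h2 : Summable (fun n : ℕ => (32 * Real.exp 1 * R)^(n+1) / ((n+1).factorial : ℝ)) :=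
    h.comp_injective Nat.succ_injective
  exact h2.mul_right _

lemma key_bound {α : ℝ} (hα : |α| ≤ 1) {t : ℝ} (ht : 0 ≤ t) {R : ℝ} (hR : 1 ≤ R) (n : ℕ)
    {Q : ℝ} (hQ : |Q| ≤ (2*R)^(n+1) / (n+1).factorial * EE R) :
    ((n+1:ℕ):ℝ)^2 * (|bC α n t| * |Q|) ≤ u R n := by
  have he : (0:ℝ) < Real.exp 1 := Real.exp_pos 1
  have hk0 : (0:ℝ) ≤ ((n+1:ℕ):ℝ) := by positivity
  have hkp : ((n+1:ℕ):ℝ) ≤ 2^(n+1) := by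
    exact_mod_cast (Nat.lt_two_pow_self (n := n+1)).le
  have hb := bC_abs_le hα n ht
  have h2 : ((n+1:ℕ):ℝ)^3 * ((2*Real.exp 1)^(n+1) * (2*R)^(n+1)) ≤ (32*Real.exp 1*R)^(n+1) := by
    calc ((n+1:ℕ):ℝ)^3 * ((2*Real.exp 1)^(n+1) * (2*R)^(n+1))
        ≤ ((2:ℝ)^(n+1))^3 * ((2*Real.exp 1)^(n+1) * (2*R)^(n+1)) := by
          apply mul_le_mul_of_nonneg_right (pow_le_pow_left₀ hk0 hkp 3) (by positivity)
      _ = (32*Real.exp 1*R)^(n+1) := by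
          rw [← pow_mul, mul_comm (n+1) 3, pow_mul, ← mul_pow, ← mul_pow]
          congr 1
          ring
  calc ((n+1:ℕ):ℝ)^2 * (|bC α n t| * |Q|)
      ≤ ((n+1:ℕ):ℝ)^2 * ((((n+1:ℕ):ℝ) * (2 * Real.exp 1)^(n+1)) *
          ((2*R)^(n+1) / (n+1).factorial * EE R)) := by
        apply mul_le_mul_of_nonneg_left
          (mul_le_mul hb hQ (abs_nonneg _) (by positivity)) (by positivity)
    _ = (((n+1:ℕ):ℝ)^3 * ((2*Real.exp 1)^(n+1) * (2*R)^(n+1))) *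
          (EE R / (n+1).factorial) := by ring
    _ ≤ (32*Real.exp 1*R)^(n+1) * (EE R / (n+1).factorial) := by
        apply mul_le_mul_of_nonneg_right h2
        have := EE_nonneg R
        positivity
    _ = u R n := by unfold u; ring

lemma one_le_ksq (n : ℕ) : (1:ℝ) ≤ ((n+1:ℕ):ℝ)^2 := by
  have : (1:ℝ) ≤ ((n+1:ℕ):ℝ) := by exact_mod_cast Nat.one_le_iff_ne_zero.2 (Nat.succ_ne_zero n)
  nlinarith

lemma outer_term_bound {α : ℝ} (hα : |α| ≤ 1) {t : ℝ} (ht : 0 ≤ t) {R : ℝ} (hR : 1 ≤ R)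
    (n : ℕ) {Q : ℝ} (hQ : |Q| ≤ (2*R)^(n+1) / (n+1).factorial * EE R) :
    |bC α n t * Q| ≤ u R n := by
  have h := key_bound hα ht hR n hQ
  rw [abs_mul]
  nlinarith [abs_nonneg (bC α n t), abs_nonneg Q, one_le_ksq n,
    mul_nonneg (abs_nonneg (bC α n t)) (abs_nonneg Q)]

lemma hasDerivAt_bC (α : ℝ) (n : ℕ) (t : ℝ) :
    HasDerivAt (fun s => bC α n s) (-((((n+1:ℕ)):ℝ)^2) * bC α n t) t := by
  have h1 : HasDerivAt (fun s : ℝ => -((((n+1:ℕ)):ℝ)^2) * s) (-((((n+1:ℕ)):ℝ)^2)) t := by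
    simpa using (hasDerivAt_id t).const_mul (-((((n+1:ℕ)):ℝ)^2))
  have h2 := h1.exp
  have h3 := h2.const_mul (((n+1:ℕ):ℝ) * gegenbauerC0 (n+1) α)
  unfold bC
  exact h3.congr_deriv (by ring)

end GZ

/-- Let `|α| ≤ 1`.  The series defining `g` converges absolutely at every point of
`[0,∞) × [0,∞)`, and for every `t > 0` and `ξ > 0` the partial derivatives
`∂g/∂t`, `∂g/∂ξ`, `∂²g/∂ξ²` exist and satisfy
`∂g/∂t = −ξ² ∂²g/∂ξ² − ξ ∂g/∂ξ + ξ² g`. -/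
theorem gZero_heat_equation (α : ℝ) (hα : |α| ≤ 1) :
    (∀ t ξ : ℝ, 0 ≤ t → 0 ≤ ξ →
      Summable (fun n : ℕ => |((n + 1 : ℕ) : ℝ) * gegenbauerC0 (n + 1) α *
        Real.exp (-((n + 1 : ℕ) : ℝ) ^ 2 * t) * phiBessel 0 (n + 1) ξ|)) ∧
    ∀ t ξ : ℝ, 0 < t → 0 < ξ →
      DifferentiableAt ℝ (fun s => gZero α s ξ) t ∧
      DifferentiableAt ℝ (fun η => gZero α t η) ξ ∧
      DifferentiableAt ℝ (deriv (fun η => gZero α t η)) ξ ∧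
      deriv (fun s => gZero α s ξ) t =
        -ξ ^ 2 * deriv (deriv (fun η => gZero α t η)) ξ
          - ξ * deriv (fun η => gZero α t η) ξ + ξ ^ 2 * gZero α t ξ := by
  open GZ in
  constructor
  · intro t ξ ht hξ
    have hR : (1:ℝ) ≤ |ξ| + 1 := by linarith [abs_nonneg ξ]
    apply Summable.of_nonneg_of_le (fun n => abs_nonneg _) (fun n => ?_) (summable_u (|ξ|+1))
    rw [phiBessel_zero_eq]
    exact outer_term_bound hα ht hR n
      (P_abs_le hR (by linarith [abs_nonneg ξ]) (n+1))
  · intro t ξ ht hξ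
    -- summability of the three auxiliary series at any point
    have sumS0 : ∀ ζ : ℝ, Summable (fun n => bC α n t * P (n+1) ζ) := by
      intro ζ
      have hR : (1:ℝ) ≤ |ζ| + 1 := by linarith [abs_nonneg ζ]
      exact Summable.of_norm_bounded (summable_u (|ζ|+1)) (fun n =>
        outer_term_bound hα ht.le hR n (P_abs_le hR (by linarith [abs_nonneg ζ]) (n+1)))
    have sumS1 : ∀ ζ : ℝ, Summable (fun n => bC α n t * P1 (n+1) ζ) := by
      intro ζ
      have hR : (1:ℝ) ≤ |ζ| + 1 := by linarith [abs_nonneg ζ]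
      exact Summable.of_norm_bounded (summable_u (|ζ|+1)) (fun n =>
        outer_term_bound hα ht.le hR n (P1_abs_le hR (by linarith [abs_nonneg ζ]) (n+1)))
    have sumS2 : ∀ ζ : ℝ, Summable (fun n => bC α n t * P2 (n+1) ζ) := by
      intro ζ
      have hR : (1:ℝ) ≤ |ζ| + 1 := by linarith [abs_nonneg ζ]
      exact Summable.of_norm_bounded (summable_u (|ζ|+1)) (fun n =>
        outer_term_bound hα ht.le hR n (P2_abs_le hR (by linarith [abs_nonneg ζ]) (n+1)))
    -- time derivative
    have hR : (1:ℝ) ≤ |ξ| + 1 := by linarith [abs_nonneg ξ]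
    have hξR : |ξ| ≤ |ξ| + 1 := by linarith
    have hGt : HasDerivAt (fun s => gZero α s ξ)
        (∑' n, -((((n+1:ℕ)):ℝ)^2) * bC α n t * P (n+1) ξ) t := by
      have hfun : (fun s => gZero α s ξ) = fun s => P 0 ξ + ∑' n, bC α n s * P (n+1) ξ :=
        funext fun s => gZero_eq α s ξ
      rw [hfun]
      have h := hasDerivAt_tsum_of_isPreconnected (summable_u (|ξ|+1)) isOpen_Ioi
        isPreconnected_Ioi
        (g := fun n s => bC α n s * P (n+1) ξ)
        (g' := fun n s => -((((n+1:ℕ)):ℝ)^2) * bC α n s * P (n+1) ξ)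
        (y₀ := t) (y := t)
        (fun n s _ => (hasDerivAt_bC α n s).mul_const (P (n+1) ξ))
        (fun n s hs => ?_) ht (sumS0 ξ) ht
      · simpa using h
      · rw [Real.norm_eq_abs, abs_mul, abs_mul, abs_neg,
          abs_of_nonneg (by positivity : (0:ℝ) ≤ ((n+1:ℕ):ℝ)^2), mul_assoc]
        exact key_bound hα (le_of_lt hs) hR n (P_abs_le hR hξR (n+1))
    -- first space derivative, at every point
    have hGxi : ∀ η : ℝ, HasDerivAt (fun y => gZero α t y)
        (P1 0 η + ∑' n, bC α n t * P1 (n+1) η) η := by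
      intro η
      have hfun : (fun y => gZero α t y) = fun y => P 0 y + ∑' n, bC α n t * P (n+1) y :=
        funext fun y => gZero_eq α t y
      rw [hfun]
      have hR' : (1:ℝ) ≤ |η| + 1 := by linarith [abs_nonneg η]
      refine (hasDerivAt_P 0 η).add ?_
      refine hasDerivAt_tsum_of_isPreconnected (summable_u (|η|+1)) Metric.isOpen_ball
        ((convex_ball (0:ℝ) (|η|+1)).isPreconnected)
        (fun n y _ => (hasDerivAt_P (n+1) y).const_mul (bC α n t))
        (fun n y hy => ?_)
        (mem_ball_zero_iff.2 (by rw [Real.norm_eq_abs]; linarith)) (sumS0 η)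
        (mem_ball_zero_iff.2 (by rw [Real.norm_eq_abs]; linarith))
      rw [mem_ball_zero_iff, Real.norm_eq_abs] at hy
      exact outer_term_bound hα ht.le hR' n (P1_abs_le hR' hy.le (n+1))
    have hderiv1 : deriv (fun y => gZero α t y)
        = fun η => P1 0 η + ∑' n, bC α n t * P1 (n+1) η :=
      funext fun η => (hGxi η).deriv
    -- second space derivative
    have hGxixi : HasDerivAt (fun η => P1 0 η + ∑' n, bC α n t * P1 (n+1) η)
        (P2 0 ξ + ∑' n, bC α n t * P2 (n+1) ξ) ξ := by
      refine (hasDerivAt_P1 0 ξ).add ?_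
      refine hasDerivAt_tsum_of_isPreconnected (summable_u (|ξ|+1)) Metric.isOpen_ball
        ((convex_ball (0:ℝ) (|ξ|+1)).isPreconnected)
        (fun n y _ => (hasDerivAt_P1 (n+1) y).const_mul (bC α n t))
        (fun n y hy => ?_)
        (mem_ball_zero_iff.2 (by rw [Real.norm_eq_abs]; linarith)) (sumS1 ξ)
        (mem_ball_zero_iff.2 (by rw [Real.norm_eq_abs]; linarith))
      rw [mem_ball_zero_iff, Real.norm_eq_abs] at hy
      exact outer_term_bound hα ht.le hR n (P2_abs_le hR hy.le (n+1))
    refine ⟨hGt.differentiableAt, (hGxi ξ).differentiableAt, ?_, ?_⟩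
    · rw [hderiv1]
      exact hGxixi.differentiableAt
    · rw [hGt.deriv, hderiv1, hGxixi.deriv, gZero_eq α t ξ]
      have hb0 : ξ^2 * P2 0 ξ + ξ * P1 0 ξ = ξ^2 * P 0 ξ := by
        have := bessel 0 ξ
        simp only [Nat.cast_zero] at this
        linarith [this]
      have termwise : ∀ n : ℕ, -((((n+1:ℕ)):ℝ)^2) * bC α n t * P (n+1) ξ
          = -(ξ^2 * (bC α n t * P2 (n+1) ξ)) - ξ * (bC α n t * P1 (n+1) ξ)
            + ξ^2 * (bC α n t * P (n+1) ξ) := by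
        intro n
        linear_combination (bC α n t) * bessel (n+1) ξ
      calc ∑' n, -((((n+1:ℕ)):ℝ)^2) * bC α n t * P (n+1) ξ
          = ∑' n, (-(ξ^2 * (bC α n t * P2 (n+1) ξ)) - ξ * (bC α n t * P1 (n+1) ξ)
              + ξ^2 * (bC α n t * P (n+1) ξ)) := tsum_congr termwise
        _ = -(ξ^2 * ∑' n, bC α n t * P2 (n+1) ξ) - ξ * ∑' n, bC α n t * P1 (n+1) ξ
              + ξ^2 * ∑' n, bC α n t * P (n+1) ξ := by
            rw [Summable.tsum_add (Summable.sub (((sumS2 ξ).mul_left (ξ^2)).neg)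
                ((sumS1 ξ).mul_left ξ)) ((sumS0 ξ).mul_left (ξ^2)),
              Summable.tsum_sub (((sumS2 ξ).mul_left (ξ^2)).neg) ((sumS1 ξ).mul_left ξ),
              tsum_neg, tsum_mul_left, tsum_mul_left, tsum_mul_left]
        _ = -ξ ^ 2 * (P2 0 ξ + ∑' n, bC α n t * P2 (n+1) ξ)
              - ξ * (P1 0 ξ + ∑' n, bC α n t * P1 (n+1) ξ)
              + ξ ^ 2 * (P 0 ξ + ∑' n, bC α n t * P (n+1) ξ) := by
            linear_combination hb0
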